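/- Let p ≥ 2 be real, m a natural number, and ε ∈ (0,2]. For all x, y in ℝ^m with the ℓ^p norm satisfying ‖x‖ ≤ 1, ‖y‖ ≤ 1, and ‖x−y‖ ≥ ε, we have ‖(x+y)/2‖ ≤ (1 − (ε/2)^p)^(1/p). -/

import Mathlib

open scoped ENNReal NNReal

private lemma auxA (q : ℝ) (hq : 1 ≤ q) {x y : ℝ} (hx : 0 ≤ x) (hy : 0 ≤ y) :
    x ^ q + y ^ q ≤ (x + y) ^ q := by
  have := NNReal.add_rpow_le_rpow_add (⟨x, hx⟩ : ℝ≥0) (⟨y, hy⟩ : ℝ≥0) hq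
  exact_mod_cast this

private lemma auxB (q : ℝ) (hq : 1 ≤ q) {x y : ℝ} (hx : 0 ≤ x) (hy : 0 ≤ y) :
    ((x + y) / 2) ^ q ≤ (x ^ q + y ^ q) / 2 := by
  have := NNReal.rpow_arith_mean_le_arith_mean2_rpow (1/2) (1/2) (⟨x, hx⟩ : ℝ≥0)
    (⟨y, hy⟩ : ℝ≥0) (add_halves 1) hq
  have h' : ((1:ℝ)/2 * x + 1/2 * y) ^ q ≤ 1/2 * x ^ q + 1/2 * y ^ q := by
    exact_mod_cast this
  calc ((x + y) / 2) ^ q = ((1:ℝ)/2 * x + 1/2 * y) ^ q := by ring_nf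
    _ ≤ 1/2 * x ^ q + 1/2 * y ^ q := h'
    _ = (x ^ q + y ^ q) / 2 := by ring

private lemma clarkson_scalar (r : ℝ) (hr : 2 ≤ r) (a b : ℝ) :
    |(a + b) / 2| ^ r + |(a - b) / 2| ^ r ≤ (|a| ^ r + |b| ^ r) / 2 := by
  have hq : (1:ℝ) ≤ r / 2 := by linarith
  set u := |(a + b) / 2| with hu
  set v := |(a - b) / 2| with hv
  have hu0 : 0 ≤ u := abs_nonneg _
  have hv0 : 0 ≤ v := abs_nonneg _
  have hsq : ∀ t : ℝ, (|t| ^ (2:ℝ)) ^ (r / 2) = |t| ^ r := by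
    intro t
    rw [← Real.rpow_mul (abs_nonneg t)]
    ring_nf
  have h1 : u ^ r + v ^ r ≤ (u ^ (2:ℝ) + v ^ (2:ℝ)) ^ (r / 2) := by
    calc u ^ r + v ^ r = (u ^ (2:ℝ)) ^ (r/2) + (v ^ (2:ℝ)) ^ (r/2) := by
          rw [hsq, hsq]
      _ ≤ (u ^ (2:ℝ) + v ^ (2:ℝ)) ^ (r/2) :=
          auxA (r/2) hq (Real.rpow_nonneg hu0 2) (Real.rpow_nonneg hv0 2)
  have h2 : u ^ (2:ℝ) + v ^ (2:ℝ) = (|a| ^ (2:ℝ) + |b| ^ (2:ℝ)) / 2 := by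
    rw [Real.rpow_two, Real.rpow_two, Real.rpow_two, Real.rpow_two,
      sq_abs, sq_abs, sq_abs, sq_abs]
    ring
  have h3 : ((|a| ^ (2:ℝ) + |b| ^ (2:ℝ)) / 2) ^ (r/2)
      ≤ ((|a| ^ (2:ℝ)) ^ (r/2) + (|b| ^ (2:ℝ)) ^ (r/2)) / 2 :=
    auxB (r/2) hq (Real.rpow_nonneg (abs_nonneg a) 2) (Real.rpow_nonneg (abs_nonneg b) 2)
  calc u ^ r + v ^ r ≤ (u ^ (2:ℝ) + v ^ (2:ℝ)) ^ (r/2) := h1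
    _ = ((|a| ^ (2:ℝ) + |b| ^ (2:ℝ)) / 2) ^ (r/2) := by rw [h2]
    _ ≤ ((|a| ^ (2:ℝ)) ^ (r/2) + (|b| ^ (2:ℝ)) ^ (r/2)) / 2 := h3
    _ = (|a| ^ r + |b| ^ r) / 2 := by rw [hsq, hsq]

theorem stmt_8 (p : ℝ≥0∞) (hp : 2 ≤ p) (hp' : p ≠ ⊤) (m : ℕ) (ε : ℝ)
    (hε : 0 < ε) (hε2 : ε ≤ 2) (x y : PiLp p (fun _ : Fin m => ℝ))
    (hx : ‖x‖ ≤ 1) (hy : ‖y‖ ≤ 1) (hxy : ε ≤ ‖x - y‖) :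
    ‖(2⁻¹ : ℝ) • (x + y)‖ ≤ (1 - (ε / 2) ^ p.toReal) ^ (1 / p.toReal) := by
  haveI : Fact (1 ≤ p) := ⟨le_trans (by norm_num) hp⟩
  set r := p.toReal with hrdef
  have hr : 2 ≤ r := by
    have := ENNReal.toReal_mono hp' hp
    simpa using this
  have hr0 : 0 < r := by linarith
  -- coordinate sums
  have hnorm : ∀ z : PiLp p (fun _ : Fin m => ℝ),
      ‖z‖ = (∑ i, |z i| ^ r) ^ (1/r) := by
    intro z
    rw [PiLp.norm_eq_sum hr0 z]
    simp [Real.norm_eq_abs]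
    rfl
  have hsum_nonneg : ∀ z : PiLp p (fun _ : Fin m => ℝ), 0 ≤ ∑ i, |z i| ^ r := by
    intro z
    exact Finset.sum_nonneg fun i _ => Real.rpow_nonneg (abs_nonneg _) r
  have hpow : ∀ z : PiLp p (fun _ : Fin m => ℝ), ‖z‖ ^ r = ∑ i, |z i| ^ r := by
    intro z
    rw [hnorm z, ← Real.rpow_mul (hsum_nonneg z), one_div,
      inv_mul_cancel₀ (ne_of_gt hr0), Real.rpow_one]
  have hxs : ∑ i, |x i| ^ r ≤ 1 := by
    rw [← hpow x]
    calc ‖x‖ ^ r ≤ 1 ^ r := Real.rpow_le_rpow (norm_nonneg x) hx hr0.le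
      _ = 1 := Real.one_rpow r
  have hys : ∑ i, |y i| ^ r ≤ 1 := by
    rw [← hpow y]
    calc ‖y‖ ^ r ≤ 1 ^ r := Real.rpow_le_rpow (norm_nonneg y) hy hr0.le
      _ = 1 := Real.one_rpow r
  have hds : ε ^ r ≤ ∑ i, |x i - y i| ^ r := by
    have h : ε ^ r ≤ ‖x - y‖ ^ r := Real.rpow_le_rpow hε.le hxy hr0.le
    rw [hpow (x - y)] at h
    simpa [PiLp.sub_apply] using h
  -- Clarkson summed
  have hclark : (∑ i, |(x i + y i) / 2| ^ r) + (∑ i, |(x i - y i) / 2| ^ r)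
      ≤ ((∑ i, |x i| ^ r) + (∑ i, |y i| ^ r)) / 2 := by
    have h := Finset.sum_le_sum (s := Finset.univ)
      (fun i _ => clarkson_scalar r hr (x i) (y i))
    simpa [Finset.sum_add_distrib, ← Finset.sum_div] using h
  have hdhalf : (ε / 2) ^ r ≤ ∑ i, |(x i - y i) / 2| ^ r := by
    have heq : ∀ i, |(x i - y i) / 2| ^ r = |x i - y i| ^ r / 2 ^ r := by
      intro i
      rw [abs_div, abs_two, Real.div_rpow (abs_nonneg _) (by norm_num : (0:ℝ) ≤ 2)]
    simp only [heq]
    rw [← Finset.sum_div, Real.div_rpow hε.le (by norm_num : (0:ℝ) ≤ 2)]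
    gcongr
  have hmain : ∑ i, |(x i + y i) / 2| ^ r ≤ 1 - (ε / 2) ^ r := by
    linarith
  -- conclude
  have hcoord : ∀ i, ((2⁻¹ : ℝ) • (x + y)) i = (x i + y i) / 2 := by
    intro i
    simp [PiLp.smul_apply, PiLp.add_apply, smul_eq_mul]
    ring
  rw [hnorm ((2⁻¹ : ℝ) • (x + y))]
  simp only [hcoord]
  exact Real.rpow_le_rpow
    (Finset.sum_nonneg fun i _ => Real.rpow_nonneg (abs_nonneg _) r) hmain (by positivity)
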